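/- Let G = (V,E) be a graph, C ⊆ V, and suppose D is a set of directed edges of G forming vertex-disjoint directed paths and cycles (each vertex has in-degree ≤ 1 and out-degree ≤ 1 in D) with exactly one path, from s to t. Suppose removing C from G yields components Y₁,…,Y_k. If, for each vertex of C, the D-edges incident to it are known, then t is determined: either t ∈ C, or t lies in the unique component Y_i into which the number of known D-edges entering Y_i exceeds the number leaving Y_i (counting the start appropriately if s ∈ Y_i). -/

import Mathlib

open Finset in
lemma key_count {V : Type*} [DecidableEq V]
    (C : Finset V) (D : Finset (V × V)) (s t : V)
    (hout : ∀ u : V, (D.filter fun e => e.1 = u).card ≤ 1)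
    (hin : ∀ u : V, (D.filter fun e => e.2 = u).card ≤ 1)
    (hs : (D.filter fun e => e.2 = s).card = 0)
    (ht : (D.filter fun e => e.1 = t).card = 0)
    (hreach : Relation.ReflTransGen (fun a b => (a, b) ∈ D) s t)
    (hend : ∀ v : V, (D.filter fun e => e.1 = v).card = 0 →
      1 ≤ (D.filter fun e => e.2 = v).card → v = t)
    (hstart : ∀ v : V, (D.filter fun e => e.2 = v).card = 0 →
      1 ≤ (D.filter fun e => e.1 = v).card → v = s)
    (S : Finset V)
    (hSC : ∀ u ∈ S, u ∉ C)
    (hcl2 : ∀ e ∈ D, e.2 ∈ S → e.1 ∉ C → e.1 ∈ S)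
    (hcl1 : ∀ e ∈ D, e.1 ∈ S → e.2 ∉ C → e.2 ∈ S) :
    t ∈ S ↔
      (D.filter fun e => e.1 ∈ S ∧ e.2 ∈ C).card <
      (D.filter fun e => e.1 ∈ C ∧ e.2 ∈ S).card + (if s ∈ S then 1 else 0) := by
  classical
  set i : V → ℕ := fun u => (D.filter fun e => e.2 = u).card with hidef
  set o : V → ℕ := fun u => (D.filter fun e => e.1 = u).card with hodef
  -- fibers
  have hInSum : (D.filter fun e => e.2 ∈ S).card = ∑ u ∈ S, i u := by
    refine (Finset.card_eq_sum_card_fiberwise (s := D.filter fun e => e.2 ∈ S)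
      (t := S) (f := fun e => e.2) (fun e he => (mem_filter.mp he).2)).trans ?_
    refine Finset.sum_congr rfl fun u hu => ?_
    congr 1
    ext e
    simp only [mem_filter]
    constructor
    · rintro ⟨⟨h1, _⟩, h3⟩; exact ⟨h1, h3⟩
    · rintro ⟨h1, h3⟩; exact ⟨⟨h1, h3 ▸ hu⟩, h3⟩
  have hOutSum : (D.filter fun e => e.1 ∈ S).card = ∑ u ∈ S, o u := by
    refine (Finset.card_eq_sum_card_fiberwise (s := D.filter fun e => e.1 ∈ S)
      (t := S) (f := fun e => e.1) (fun e he => (mem_filter.mp he).2)).trans ?_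
    refine Finset.sum_congr rfl fun u hu => ?_
    congr 1
    ext e
    simp only [mem_filter]
    constructor
    · rintro ⟨⟨h1, _⟩, h3⟩; exact ⟨h1, h3⟩
    · rintro ⟨h1, h3⟩; exact ⟨⟨h1, h3 ▸ hu⟩, h3⟩
  -- splits
  have hInSplit : (D.filter fun e => e.2 ∈ S).card
      = (D.filter fun e => e.1 ∈ S ∧ e.2 ∈ S).card
        + (D.filter fun e => e.1 ∈ C ∧ e.2 ∈ S).card := by
    have key := Finset.card_filter_add_card_filter_not
      (s := D.filter fun e => e.2 ∈ S) (p := fun e => e.1 ∈ C)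
    have h1 : ((D.filter fun e => e.2 ∈ S).filter fun e => e.1 ∈ C)
        = D.filter fun e => e.1 ∈ C ∧ e.2 ∈ S := by
      ext e; simp only [mem_filter]; tauto
    have h2 : ((D.filter fun e => e.2 ∈ S).filter fun e => ¬ e.1 ∈ C)
        = D.filter fun e => e.1 ∈ S ∧ e.2 ∈ S := by
      ext e; simp only [mem_filter]
      constructor
      · rintro ⟨⟨hD, h2S⟩, hnC⟩; exact ⟨hD, hcl2 e hD h2S hnC, h2S⟩
      · rintro ⟨hD, h1S, h2S⟩; exact ⟨⟨hD, h2S⟩, hSC _ h1S⟩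
    rw [h1, h2] at key
    omega
  have hOutSplit : (D.filter fun e => e.1 ∈ S).card
      = (D.filter fun e => e.1 ∈ S ∧ e.2 ∈ S).card
        + (D.filter fun e => e.1 ∈ S ∧ e.2 ∈ C).card := by
    have key := Finset.card_filter_add_card_filter_not
      (s := D.filter fun e => e.1 ∈ S) (p := fun e => e.2 ∈ C)
    have h1 : ((D.filter fun e => e.1 ∈ S).filter fun e => e.2 ∈ C)
        = D.filter fun e => e.1 ∈ S ∧ e.2 ∈ C := by
      ext e; simp only [mem_filter]; tauto
    have h2 : ((D.filter fun e => e.1 ∈ S).filter fun e => ¬ e.2 ∈ C)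
        = D.filter fun e => e.1 ∈ S ∧ e.2 ∈ S := by
      ext e; simp only [mem_filter]
      constructor
      · rintro ⟨⟨hD, h1S⟩, hnC⟩; exact ⟨hD, h1S, hcl1 e hD h1S hnC⟩
      · rintro ⟨hD, h1S, h2S⟩; exact ⟨⟨hD, h1S⟩, hSC _ h2S⟩
    rw [h1, h2] at key
    omega
  -- main integer identity
  have hmain : ((D.filter fun e => e.1 ∈ C ∧ e.2 ∈ S).card : ℤ)
      - ((D.filter fun e => e.1 ∈ S ∧ e.2 ∈ C).card : ℤ)
      = ∑ u ∈ S, ((i u : ℤ) - (o u : ℤ)) := by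
    rw [Finset.sum_sub_distrib]
    have h1 : (∑ u ∈ S, (i u : ℤ)) = ((D.filter fun e => e.2 ∈ S).card : ℤ) := by
      exact_mod_cast congrArg (Nat.cast (R := ℤ)) hInSum.symm
    have h2 : (∑ u ∈ S, (o u : ℤ)) = ((D.filter fun e => e.1 ∈ S).card : ℤ) := by
      exact_mod_cast congrArg (Nat.cast (R := ℤ)) hOutSum.symm
    rw [h1, h2]
    omega
  -- pointwise degree facts
  have hzero : ∀ u, u ≠ s → u ≠ t → (i u : ℤ) - o u = 0 := by
    intro u hus hut
    have h1 : o u ≤ 1 := hout u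
    have h2 : i u ≤ 1 := hin u
    rcases Nat.eq_zero_or_pos (o u) with h | h
    · rcases Nat.eq_zero_or_pos (i u) with h' | h'
      · rw [h, h']; simp
      · exact absurd (hend u h h') hut
    · rcases Nat.eq_zero_or_pos (i u) with h' | h'
      · exact absurd (hstart u h' h) hus
      · omega
  have hsiso : o s = 0 → s = t := by
    intro h
    rcases hreach.cases_head with h' | ⟨c, hc, _⟩
    · exact h'
    · exfalso
      have hm : (s, c) ∈ D.filter fun e => e.1 = s := mem_filter.mpr ⟨hc, rfl⟩
      have hpos : 0 < o s := card_pos.mpr ⟨_, hm⟩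
      omega
  have hindt : s ≠ t → 1 ≤ i t := by
    intro hst
    rcases hreach.cases_tail with h' | ⟨c, _, hc⟩
    · exact absurd h'.symm hst
    · exact card_pos.mpr ⟨(c, t), mem_filter.mpr ⟨hc, rfl⟩⟩
  constructor
  · -- t ∈ S → inequality
    intro htS
    by_cases hst : s = t
    · subst hst
      have hall : ∑ u ∈ S, ((i u : ℤ) - o u) = 0 := by
        refine Finset.sum_eq_zero fun u hu => ?_
        by_cases hu' : u = s
        · subst hu'
          have h1 : i u = 0 := hs
          have h2 : o u = 0 := ht
          omega
        · exact hzero u hu' hu'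
      rw [hall] at hmain
      have hsS : s ∈ S := htS
      simp only [hsS, if_true]
      omega
    · have hsplit : ∑ u ∈ S, ((i u : ℤ) - o u)
          = ((i t : ℤ) - o t) + ∑ u ∈ S.erase t, ((i u : ℤ) - o u) :=
        (Finset.add_sum_erase S _ htS).symm
      have hbound : ∀ u ∈ S.erase t, (if u = s then (-1 : ℤ) else 0) ≤ (i u : ℤ) - o u := by
        intro u hu
        have hut : u ≠ t := (Finset.mem_erase.mp hu).1
        by_cases hus : u = s
        · subst hus
          have h1 : o u ≤ 1 := hout u
          have h2 : i u = 0 := hs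
          rw [if_pos rfl]
          omega
        · rw [if_neg hus, hzero u hus hut]
      have hsum2 : (if s ∈ S.erase t then (-1 : ℤ) else 0)
          ≤ ∑ u ∈ S.erase t, ((i u : ℤ) - o u) := by
        calc (if s ∈ S.erase t then (-1 : ℤ) else 0)
            = ∑ u ∈ S.erase t, (if u = s then (-1 : ℤ) else 0) := by
              rw [Finset.sum_ite_eq' (S.erase t) s (fun _ => (-1 : ℤ))]
          _ ≤ _ := Finset.sum_le_sum hbound
      have hdt : (1 : ℤ) ≤ (i t : ℤ) - o t := by
        have h1 := hindt hst
        have h2 : o t = 0 := ht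
        omega
      have hms : s ∈ S.erase t ↔ s ∈ S := by
        rw [Finset.mem_erase]; exact ⟨fun h => h.2, fun h => ⟨hst, h⟩⟩
      by_cases hsS : s ∈ S
      · rw [if_pos hsS]
        rw [if_pos (hms.mpr hsS)] at hsum2
        rw [hsplit] at hmain
        omega
      · rw [if_neg hsS]
        rw [if_neg (fun h => hsS (hms.mp h))] at hsum2
        rw [hsplit] at hmain
        omega
  · -- inequality → t ∈ S (contrapositive)
    intro hineq
    by_contra htS
    have hbound : ∀ u ∈ S, (i u : ℤ) - o u ≤ (if u = s then (-1 : ℤ) else 0) := by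
      intro u hu
      have hut : u ≠ t := fun h => htS (h ▸ hu)
      by_cases hus : u = s
      · subst hus
        rw [if_pos rfl]
        have h1 : i u = 0 := hs
        have h2 : o u ≠ 0 := fun h => hut (hsiso h)
        omega
      · rw [if_neg hus, hzero u hus hut]
    have hsum2 : ∑ u ∈ S, ((i u : ℤ) - o u) ≤ (if s ∈ S then (-1 : ℤ) else 0) := by
      calc ∑ u ∈ S, ((i u : ℤ) - o u)
          ≤ ∑ u ∈ S, (if u = s then (-1 : ℤ) else 0) := Finset.sum_le_sum hbound
        _ = _ := Finset.sum_ite_eq' S s (fun _ => (-1 : ℤ))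
    by_cases hsS : s ∈ S
    · rw [if_pos hsS] at hsum2
      rw [if_pos hsS] at hineq
      omega
    · rw [if_neg hsS] at hsum2
      rw [if_neg hsS] at hineq
      omega



/-- The graph `G` with the vertices of `C` avoided: edges of `G` with both
endpoints outside `C`. Its reachability classes on `Cᶜ` are the connected
components `Y₁, …, Y_k` of `G` with `C` removed. -/
def avoidGraph {V : Type*} (G : SimpleGraph V) (C : Set V) : SimpleGraph V where
  Adj a b := G.Adj a b ∧ a ∉ C ∧ b ∉ C
  symm := ⟨fun _ _ ⟨h, ha, hb⟩ => ⟨h.symm, hb, ha⟩⟩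
  loopless := ⟨fun a ⟨h, _, _⟩ => G.loopless.irrefl a h⟩

open Classical in
/-- Observation 6 ("cut observation"): let `D` be a set of directed edges of `G`
in which every vertex has in- and out-degree at most one, forming
vertex-disjoint directed paths and cycles with exactly one (possibly trivial)
path, going from `s` to `t`.  Let `C ⊆ V` and let the components of `G` with
`C` removed be the reachability classes `comp v` (`v ∉ C`).  Knowing the
`D`-edges incident to `C`, the end-vertex `t` is determined: any component into
which strictly more known edges enter (counting the start if `s` lies there)
than leave contains `t`; and if there is no such component then `t ∈ C`. -/
theorem cut_observation
    (V : Type*) [Fintype V] [DecidableEq V]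
    (G : SimpleGraph V) (C : Finset V) (D : Finset (V × V)) (s t : V)
    (hadj : ∀ e ∈ D, G.Adj e.1 e.2)
    (hout : ∀ u : V, (D.filter fun e => e.1 = u).card ≤ 1)
    (hin : ∀ u : V, (D.filter fun e => e.2 = u).card ≤ 1)
    (hs : (D.filter fun e => e.2 = s).card = 0)
    (ht : (D.filter fun e => e.1 = t).card = 0)
    (hreach : Relation.ReflTransGen (fun a b => (a, b) ∈ D) s t)
    (hend : ∀ v : V, (D.filter fun e => e.1 = v).card = 0 →
      1 ≤ (D.filter fun e => e.2 = v).card → v = t)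
    (hstart : ∀ v : V, (D.filter fun e => e.2 = v).card = 0 →
      1 ≤ (D.filter fun e => e.1 = v).card → v = s) :
    (∀ v : V, v ∉ C →
      ({e : V × V | e ∈ D ∧ e.1 ∈ (↑C : Set V) ∧
          e.2 ∈ {w | (avoidGraph G ↑C).Reachable v w}} : Set (V × V)).ncard +
        (if s ∈ {w | (avoidGraph G ↑C).Reachable v w} then 1 else 0) >
      ({e : V × V | e ∈ D ∧ e.1 ∈ {w | (avoidGraph G ↑C).Reachable v w} ∧
          e.2 ∈ (↑C : Set V)} : Set (V × V)).ncard →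
      t ∈ {w | (avoidGraph G ↑C).Reachable v w}) ∧
    ((∀ v : V, v ∉ C →
      ({e : V × V | e ∈ D ∧ e.1 ∈ (↑C : Set V) ∧
          e.2 ∈ {w | (avoidGraph G ↑C).Reachable v w}} : Set (V × V)).ncard +
        (if s ∈ {w | (avoidGraph G ↑C).Reachable v w} then 1 else 0) ≤
      ({e : V × V | e ∈ D ∧ e.1 ∈ {w | (avoidGraph G ↑C).Reachable v w} ∧
          e.2 ∈ (↑C : Set V)} : Set (V × V)).ncard) →
      t ∈ C) := by
  classical
  have main : ∀ v : V, v ∉ C →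
      (t ∈ {w | (avoidGraph G ↑C).Reachable v w} ↔
        ({e : V × V | e ∈ D ∧ e.1 ∈ {w | (avoidGraph G ↑C).Reachable v w} ∧
            e.2 ∈ (↑C : Set V)} : Set (V × V)).ncard <
        ({e : V × V | e ∈ D ∧ e.1 ∈ (↑C : Set V) ∧
            e.2 ∈ {w | (avoidGraph G ↑C).Reachable v w}} : Set (V × V)).ncard
          + (if s ∈ {w | (avoidGraph G ↑C).Reachable v w} then 1 else 0)) := by
    intro v hv
    set S : Finset V := Finset.univ.filter (fun w => (avoidGraph G ↑C).Reachable v w) with hS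
    have hmemS : ∀ w, w ∈ S ↔ (avoidGraph G ↑C).Reachable v w := by
      intro w
      simp [hS]
    have hSC : ∀ u ∈ S, u ∉ C := by
      intro u hu
      have hr := (hmemS u).mp hu
      rw [SimpleGraph.reachable_iff_reflTransGen] at hr
      rcases hr.cases_tail with rfl | ⟨c, _, hadj'⟩
      · exact hv
      · obtain ⟨_, _, hnot⟩ := hadj'
        exact fun hC => hnot (Finset.mem_coe.mpr hC)
    have hcl2 : ∀ e ∈ D, e.2 ∈ S → e.1 ∉ C → e.1 ∈ S := by
      intro e heD h2 h1
      refine (hmemS _).mpr (((hmemS _).mp h2).trans (SimpleGraph.Adj.reachable ?_))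
      exact ⟨(hadj e heD).symm,
        fun h => hSC _ h2 (Finset.mem_coe.mp h),
        fun h => h1 (Finset.mem_coe.mp h)⟩
    have hcl1 : ∀ e ∈ D, e.1 ∈ S → e.2 ∉ C → e.2 ∈ S := by
      intro e heD h1 h2
      refine (hmemS _).mpr (((hmemS _).mp h1).trans (SimpleGraph.Adj.reachable ?_))
      exact ⟨hadj e heD,
        fun h => hSC _ h1 (Finset.mem_coe.mp h),
        fun h => h2 (Finset.mem_coe.mp h)⟩
    have hkey := key_count C D s t hout hin hs ht hreach hend hstart S hSC hcl2 hcl1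
    have hset1 : ({e : V × V | e ∈ D ∧ e.1 ∈ (↑C : Set V) ∧
        e.2 ∈ {w | (avoidGraph G ↑C).Reachable v w}} : Set (V × V)).ncard
        = (D.filter fun e => e.1 ∈ C ∧ e.2 ∈ S).card := by
      have heq : ({e : V × V | e ∈ D ∧ e.1 ∈ (↑C : Set V) ∧
          e.2 ∈ {w | (avoidGraph G ↑C).Reachable v w}} : Set (V × V))
          = ↑(D.filter fun e => e.1 ∈ C ∧ e.2 ∈ S) := by
        ext e
        simp only [Set.mem_setOf_eq, Finset.mem_coe, Finset.mem_filter, hmemS]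
      rw [heq, Set.ncard_coe_finset]
    have hset2 : ({e : V × V | e ∈ D ∧ e.1 ∈ {w | (avoidGraph G ↑C).Reachable v w} ∧
        e.2 ∈ (↑C : Set V)} : Set (V × V)).ncard
        = (D.filter fun e => e.1 ∈ S ∧ e.2 ∈ C).card := by
      have heq : ({e : V × V | e ∈ D ∧ e.1 ∈ {w | (avoidGraph G ↑C).Reachable v w} ∧
          e.2 ∈ (↑C : Set V)} : Set (V × V))
          = ↑(D.filter fun e => e.1 ∈ S ∧ e.2 ∈ C) := by
        ext e
        simp only [Set.mem_setOf_eq, Finset.mem_coe, Finset.mem_filter, hmemS]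
      rw [heq, Set.ncard_coe_finset]
    have hif : (if s ∈ {w | (avoidGraph G ↑C).Reachable v w} then 1 else 0)
        = (if s ∈ S then 1 else 0) :=
      if_congr (Iff.symm (hmemS s)) rfl rfl
    rw [hset1, hset2, hif]
    exact (Iff.symm (hmemS t)).trans hkey
  constructor
  · intro v hv h
    exact (main v hv).mpr h
  · intro hall
    by_contra htC
    have ht' := (main t htC).mp (SimpleGraph.Reachable.refl t)
    have := hall t htC
    omega
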